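/- Let h: L → M and g: N → M be morphisms of DGLAs and endow the cone C_{(h,g)} with the transferred L∞-algebra brackets ⟨ ⟩_n defined by the explicit tree formula via ι, π, K. Then for every n ≥ 3, the bracket ⟨γ₁ ⊙ ⋯ ⊙ γ_n⟩_n vanishes on all n-tuples of homogeneous elements of C_{(h,g)} = L ⊕ N ⊕ M[−1] except on (linear combinations of) tuples consisting of j = n−1 elements of M together with one element of L, or of j = n−1 elements of M together with one element of N; i.e., the only possibly nonzero higher products are ⟨m₁ ⊙ ⋯ ⊙ m_{n−1} ⊙ l⟩_n and ⟨m₁ ⊙ ⋯ ⊙ m_{n−1} ⊙ n⟩_n with m_i ∈ M, l ∈ L, n ∈ N. -/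

import Mathlib

noncomputable section

open TensorProduct

/-- Raw graded Lie data: a `ℤ`-graded complex vector space with a degree-one
differential and a degree-zero bracket (no axioms). -/
structure GLD where
  V : ℤ → Type
  [grp : ∀ i, AddCommGroup (V i)]
  [mod : ∀ i, Module ℂ (V i)]
  d : ∀ i, V i → V (i + 1)
  br : ∀ i j, V i → V j → V (i + j)

attribute [instance] GLD.grp GLD.mod

namespace GLD

/-- Transport along an equality of degrees. -/
def tr (L : GLD) {i j : ℤ} (h : i = j) (x : L.V i) : L.V j := h ▸ x

/-- The Maurer-Cartan equation in degree one: `dx + ½[x,x] = 0`. -/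
def MC1 (L : GLD) (x : L.V 1) : Prop :=
  L.d 1 x + (2 : ℂ)⁻¹ • L.br 1 1 x x = 0

/-- The adjoint action of a degree-zero element on degree one. -/
def ad01 (L : GLD) (a : L.V 0) (x : L.V 1) : L.V 1 := L.tr (by omega) (L.br 0 1 a x)

/-- The adjoint action of a degree-zero element on degree zero. -/
def ad00 (L : GLD) (a : L.V 0) (x : L.V 0) : L.V 0 := L.tr (by omega) (L.br 0 0 a x)

/-- The gauge action `e^a * x = x + Σ_{n≥0} ad_a^n/(n+1)! ([a,x] - da)`. -/
def gauge (L : GLD) (a : L.V 0) (x : L.V 1) : L.V 1 :=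
  x + ∑ᶠ n : ℕ, (((n+1).factorial : ℂ))⁻¹ •
    (L.ad01 a)^[n] (L.ad01 a x - L.tr (by omega) (L.d 0 a))

/-- Right-nested bracket of a word in two degree-zero letters `x` (true) and `y` (false). -/
def nest (L : GLD) (x y : L.V 0) : List Bool → L.V 0
  | [] => 0
  | [b] => if b then x else y
  | b :: (c :: rest) => L.ad00 (if b then x else y) (L.nest x y (c :: rest))

end GLD

/-- The word `x^{r₁} y^{s₁} ⋯ x^{r_n} y^{s_n}` encoded as a list of booleans. -/
def bchWord (P : List (ℕ × ℕ)) : List Bool :=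
  P.flatMap fun p => List.replicate p.1 true ++ List.replicate p.2 false

open Classical in
/-- The coefficient in Dynkin's formula for the Baker-Campbell-Hausdorff series. -/
def bchCoeff (P : List (ℕ × ℕ)) : ℂ :=
  if P = [] ∨ ¬ (∀ p ∈ P, 0 < p.1 + p.2) then 0 else
    (-1 : ℂ) ^ (P.length - 1) / (P.length : ℂ) *
      ((((P.map fun p => p.1 + p.2).sum : ℕ) : ℂ) *
        (((P.map fun p => (p.1.factorial * p.2.factorial : ℕ)).prod : ℕ) : ℂ))⁻¹

/-- The Baker-Campbell-Hausdorff product on degree-zero elements, via Dynkin's formula. -/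
def GLD.bch (L : GLD) (x y : L.V 0) : L.V 0 :=
  ∑ᶠ P : List (ℕ × ℕ), bchCoeff P • L.nest x y (bchWord P)

/-- Differential graded Lie algebra over `ℂ`. -/
structure DGLA extends GLD where
  d_add : ∀ i (x y : V i), d i (x + y) = d i x + d i y
  d_smul : ∀ i (c : ℂ) (x : V i), d i (c • x) = c • d i x
  br_add_left : ∀ i j (x x' : V i) (y : V j), br i j (x + x') y = br i j x y + br i j x' y
  br_smul_left : ∀ i j (c : ℂ) (x : V i) (y : V j), br i j (c • x) y = c • br i j x y
  br_add_right : ∀ i j (x : V i) (y y' : V j), br i j x (y + y') = br i j x y + br i j x y'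
  br_smul_right : ∀ i j (c : ℂ) (x : V i) (y : V j), br i j x (c • y) = c • br i j x y
  d_sq : ∀ i (x : V i), d (i + 1) (d i x) = 0
  antisym : ∀ i j (x : V i) (y : V j),
    br i j x y = - toGLD.tr (by omega) (((Int.negOnePow (i * j) : ℤˣ) : ℤ) • br j i y x)
  leibniz : ∀ i j (x : V i) (y : V j),
    d (i + j) (br i j x y) =
      toGLD.tr (by omega) (br (i + 1) j (d i x) y) +
        ((Int.negOnePow i : ℤˣ) : ℤ) • toGLD.tr (by omega) (br i (j + 1) x (d j y))
  jacobi : ∀ i j k (x : V i) (y : V j) (z : V k),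
    br i (j + k) x (br j k y z) =
      toGLD.tr (by omega) (br (i + j) k (br i j x y) z) +
        ((Int.negOnePow (i * j) : ℤˣ) : ℤ) • toGLD.tr (by omega) (br j (i + k) y (br i k x z))

namespace DGLA

/-- The differential as a linear map. -/
def dLin (L : DGLA) (i : ℤ) : L.V i →ₗ[ℂ] L.V (i + 1) :=
  { toFun := L.d i, map_add' := L.d_add i, map_smul' := L.d_smul i }

/-- The bracket as a bilinear map. -/
def brLin (L : DGLA) (i j : ℤ) : L.V i →ₗ[ℂ] L.V j →ₗ[ℂ] L.V (i + j) :=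
  LinearMap.mk₂ ℂ (L.br i j) (L.br_add_left i j) (fun c x y => L.br_smul_left i j c x y)
    (L.br_add_right i j) (fun c x y => L.br_smul_right i j c x y)

end DGLA

/-- Morphism of (differential) graded Lie algebras (data-level). -/
structure GLDHom (L M : GLD) where
  f : ∀ i, L.V i → M.V i
  f_add : ∀ i (x y : L.V i), f i (x + y) = f i x + f i y
  f_smul : ∀ i (c : ℂ) (x : L.V i), f i (c • x) = c • f i x
  f_d : ∀ i (x : L.V i), f (i + 1) (L.d i x) = M.d i (f i x)
  f_br : ∀ i j (x : L.V i) (y : L.V j), f (i + j) (L.br i j x y) = M.br i j (f i x) (f j y)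

/-- The components of a morphism as linear maps. -/
def GLDHom.lin {L M : GLD} (h : GLDHom L M) (i : ℤ) : L.V i →ₗ[ℂ] M.V i :=
  { toFun := h.f i, map_add' := h.f_add i, map_smul' := h.f_smul i }

section ArtinBase

variable (A : Type) [CommRing A] [Algebra ℂ A] [IsLocalRing A]

/-- The maximal ideal of a local `ℂ`-algebra. -/
abbrev mA : Ideal A := IsLocalRing.maximalIdeal A

/-- Multiplication of the maximal ideal, as a `ℂ`-bilinear map. -/
def mMul : (mA A) →ₗ[ℂ] (mA A) →ₗ[ℂ] (mA A) :=
  LinearMap.mk₂ ℂ (fun x y => ⟨x.1 * y.1, Ideal.mul_mem_left _ _ y.2⟩)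
    (fun x x' y => by ext; simp [add_mul])
    (fun c x y => by ext; simp [smul_mul_assoc])
    (fun x y y' => by ext; simp [mul_add])
    (fun c x y => by ext; simp [mul_smul_comm])

/-- For a DGLA `L`, the graded Lie data on `L ⊗ m_A`. -/
def DGLA.ten (L : DGLA) : GLD where
  V i := L.V i ⊗[ℂ] (mA A)
  d i := fun x => LinearMap.rTensor (mA A) (L.dLin i) x
  br i j := fun x y =>
    TensorProduct.curry
      ((TensorProduct.map (TensorProduct.lift (L.brLin i j)) (TensorProduct.lift (mMul A)))
        ∘ₗ (TensorProduct.tensorTensorTensorComm ℂ (L.V i) (mA A) (L.V j) (mA A)).toLinearMap)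
      x y

end ArtinBase
namespace GLD

/-- Polynomial differential forms `W[t,dt]`:
in degree `n` an element is `(p, q)` representing `Σᵢ pᵢ tⁱ + Σᵢ qᵢ tⁱ dt`,
with `pᵢ ∈ W^n` and `qᵢ ∈ W^{n-1}`. -/
def tdt (W : GLD) : GLD where
  V n := (ℕ →₀ W.V n) × (ℕ →₀ W.V (n - 1))
  d n x :=
    (x.1.sum fun i v => Finsupp.single i (W.d n v),
      (x.2.sum fun i v => Finsupp.single i (W.tr (by omega) (W.d (n - 1) v))) +
        ((Int.negOnePow n : ℤˣ) : ℤ) •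
          x.1.sum fun i v => Finsupp.single (i - 1) ((i : ℂ) • W.tr (by omega) v))
  br n m x y :=
    (x.1.sum fun i v => y.1.sum fun j w => Finsupp.single (i + j) (W.br n m v w),
      (x.1.sum fun i v => y.2.sum fun j w =>
          Finsupp.single (i + j) (W.tr (by omega) (W.br n (m - 1) v w))) +
        ((Int.negOnePow m : ℤˣ) : ℤ) •
          x.2.sum fun i v => y.1.sum fun j w =>
            Finsupp.single (i + j) (W.tr (by omega) (W.br (n - 1) m v w)))

/-- Evaluation `e_a : W[t,dt] → W` at a point `a ∈ ℂ`. -/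
def evalT (W : GLD) (a : ℂ) (n : ℤ) (x : (W.tdt).V n) : W.V n :=
  x.1.sum fun i v => (a ^ i) • v

/-- The inclusion `W → W[t,dt]` of constant polynomials. -/
def constT (W : GLD) (n : ℤ) (v : W.V n) : (W.tdt).V n :=
  (Finsupp.single 0 v, 0)

/-- The integral operator `∫₀¹ : W[t,dt] → W` of degree `-1`. -/
def int01 (W : GLD) (n : ℤ) (x : (W.tdt).V n) : W.V (n - 1) :=
  x.2.sum fun i v => (((i : ℂ) + 1))⁻¹ • v

/-- The integral operator `∫₀ᵗ`, returning the polynomial primitive of the `dt`-part. -/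
def int0t (W : GLD) (n : ℤ) (x : (W.tdt).V n) : ℕ →₀ W.V (n - 1) :=
  x.2.sum fun i v => Finsupp.single (i + 1) ((((i : ℂ) + 1))⁻¹ • v)

/-- The standard homotopy `K(m(t,dt)) = t∫₀¹ m − ∫₀ᵗ m` on `W[t,dt]`, of degree `-1`. -/
def Ktdt (W : GLD) (n : ℤ) (x : (W.tdt).V n) : (W.tdt).V (n - 1) :=
  (Finsupp.single 1 (W.int01 n x) - W.int0t n x, 0)

/-- A degreewise map between graded objects is a quasi-isomorphism: elementwise,
it induces a bijection on cohomology in every degree. -/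
def IsQuasiIso (L M : GLD) (f : ∀ i, L.V i → M.V i) : Prop :=
  ∀ i : ℤ,
    (∀ x : M.V i, M.d i x = 0 →
      ∃ y : L.V i, L.d i y = 0 ∧ ∃ z : M.V (i - 1), x = f i y + M.tr (by omega) (M.d (i - 1) z)) ∧
    (∀ y : L.V i, L.d i y = 0 →
      (∃ z : M.V (i - 1), f i y = M.tr (by omega) (M.d (i - 1) z)) →
      ∃ w : L.V (i - 1), y = L.tr (by omega) (L.d (i - 1) w))

/-- Extension of a degreewise map to polynomial differential forms, coefficientwise. -/
def tdtMap {W W' : GLD} (f : ∀ i, W.V i → W'.V i) (n : ℤ) (x : (W.tdt).V n) : (W'.tdt).V n :=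
  (x.1.sum fun i v => Finsupp.single i (f n v),
   x.2.sum fun i v => Finsupp.single i (f (n - 1) v))

end GLD

section Cone

variable (X Y Z : GLD) (hf : ∀ i, X.V i → Z.V i) (gf : ∀ i, Y.V i → Z.V i)

/-- Degree `δ` part of the shifted mapping cone `C_{(h,g)}[1]`:
`C[1]^δ = L^{δ+1} × N^{δ+1} × M^δ`. -/
abbrev ConeSh (δ : ℤ) : Type := X.V (δ + 1) × Y.V (δ + 1) × Z.V δ

/-- Degree `δ` part of the shifted ambient space of `H_{(h,g)}[1]`:
`L^{δ+1} × N^{δ+1} × M[t,dt]^{δ+1}`. -/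
abbrev HSh (δ : ℤ) : Type := X.V (δ + 1) × Y.V (δ + 1) × (Z.tdt).V (δ + 1)

/-- Transport of cone elements along a degree equality. -/
def coneTr {δ δ' : ℤ} (e : δ = δ') (w : ConeSh X Y Z δ) : ConeSh X Y Z δ' :=
  (X.tr (by omega) w.1, Y.tr (by omega) w.2.1, Z.tr e w.2.2)

/-- Transport of ambient `H[1]` elements along a degree equality. -/
def hshTr {δ δ' : ℤ} (e : δ = δ') (w : HSh X Y Z δ) : HSh X Y Z δ' :=
  (X.tr (by omega) w.1, Y.tr (by omega) w.2.1, (Z.tdt).tr (by omega) w.2.2)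

/-- The suspended differential `q₁` of the cone:
`⟨(l,n,m)⟩₁ = (−dl, −dn, dm + g(n) − h(l))`. -/
def coneQ1 (δ : ℤ) (w : ConeSh X Y Z δ) : ConeSh X Y Z (δ + 1) :=
  (- X.d (δ + 1) w.1, - Y.d (δ + 1) w.2.1,
    Z.d δ w.2.2 + gf (δ + 1) w.2.1 - hf (δ + 1) w.1)

/-- The suspended differential `q₁` of (the ambient space of) `H_{(h,g)}[1]`. -/
def hshQ1 (δ : ℤ) (w : HSh X Y Z δ) : HSh X Y Z (δ + 1) :=
  (- X.d (δ + 1) w.1, - Y.d (δ + 1) w.2.1, - (Z.tdt).d (δ + 1) w.2.2)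

/-- The membership conditions cutting out `H_{(h,g)}[1]` inside the ambient space:
`h(l) = e₁(m)` and `g(n) = e₀(m)`. -/
def hshMem (δ : ℤ) (w : HSh X Y Z δ) : Prop :=
  hf (δ + 1) w.1 = Z.evalT 1 (δ + 1) w.2.2 ∧ gf (δ + 1) w.2.1 = Z.evalT 0 (δ + 1) w.2.2

/-- The map `ι : C_{(h,g)}[1] → H_{(h,g)}[1]`,
`ι(l,n,m) = (l, n, (1−t)·g(n) + t·h(l) + dt·m)`. -/
def iotaC (δ : ℤ) (w : ConeSh X Y Z δ) : HSh X Y Z δ :=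
  (w.1, w.2.1,
    (Finsupp.single 0 (gf (δ + 1) w.2.1) + Finsupp.single 1 (hf (δ + 1) w.1 - gf (δ + 1) w.2.1),
     Finsupp.single 0 (Z.tr (show δ = (δ + 1) - 1 by omega) w.2.2)))

/-- The map `π : H_{(h,g)}[1] → C_{(h,g)}[1]`, `π(l, n, m(t,dt)) = (l, n, ∫₀¹ m)`. -/
def piC (δ : ℤ) (w : HSh X Y Z δ) : ConeSh X Y Z δ :=
  (w.1, w.2.1, Z.tr (show (δ + 1) - 1 = δ by omega) (Z.int01 (δ + 1) w.2.2))

/-- The contracting homotopy `K : H_{(h,g)}[1] → H_{(h,g)}[1]` of degree `−1`,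
`K(l, n, m(t,dt)) = (0, 0, t·∫₀¹ m − ∫₀ᵗ m)`. -/
def KC (δ : ℤ) (w : HSh X Y Z δ) : HSh X Y Z (δ - 1) :=
  (0, 0, (Z.tdt).tr (show (δ + 1) - 1 = (δ - 1) + 1 by omega) (Z.Ktdt (δ + 1) w.2.2))

/-- The suspended bracket `q₂(v ⊙ w) = (−1)^{deg v}[v, w]` of (the ambient space of)
`H_{(h,g)}`, as a degree `+1` operation in the shifted grading. -/
def hshQ2 (p q : ℤ) (v : HSh X Y Z p) (w : HSh X Y Z q) : HSh X Y Z (p + q + 1) :=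
  ((Int.negOnePow (p + 1) : ℤˣ) : ℤ) •
    (X.tr (show (p+1) + (q+1) = (p+q+1) + 1 by omega) (X.br (p + 1) (q + 1) v.1 w.1),
     Y.tr (show (p+1) + (q+1) = (p+q+1) + 1 by omega) (Y.br (p + 1) (q + 1) v.2.1 w.2.1),
     (Z.tdt).tr (show (p+1) + (q+1) = (p+q+1) + 1 by omega)
       ((Z.tdt).br (p + 1) (q + 1) v.2.2 w.2.2))

/-- The iterated expression `K q₂(ι γ₁ ⊙ K q₂(ι γ₂ ⊙ ⋯ ⊙ K q₂(ι γ_{k-1} ⊙ ι γ_k)⋯))`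
appearing in the homotopy transfer tree formula. -/
def innerNest : List (Σ δ : ℤ, ConeSh X Y Z δ) → Σ δ : ℤ, HSh X Y Z δ
  | [] => ⟨0, 0⟩
  | [γ] => ⟨γ.1, iotaC X Y Z hf gf γ.1 γ.2⟩
  | γ :: γ' :: rest =>
    let r := innerNest (γ' :: rest)
    ⟨γ.1 + r.1, hshTr X Y Z (show (γ.1 + r.1 + 1) - 1 = γ.1 + r.1 by omega)
      (KC X Y Z (γ.1 + r.1 + 1) (hshQ2 X Y Z γ.1 r.1 (iotaC X Y Z hf gf γ.1 γ.2) r.2))⟩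

theorem innerNest_deg (l : List (Σ δ : ℤ, ConeSh X Y Z δ)) :
    (innerNest X Y Z hf gf l).1 = (l.map Sigma.fst).sum := by
  induction l with
  | nil => simp [innerNest]
  | cons γ rest ih =>
    cases rest with
    | nil => simp [innerNest]
    | cons γ' r => rw [List.map_cons, List.sum_cons, ← ih]; rfl

/-- The Koszul sign `ε(σ)` of a permutation acting on graded elements of degrees `δ`. -/
def koszulSign {n : ℕ} (δ : Fin n → ℤ) (σ : Equiv.Perm (Fin n)) : ℤ :=
  ∏ p ∈ Finset.univ.filter (fun p : Fin n × Fin n => p.1 < p.2 ∧ σ p.2 < σ p.1),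
    ((Int.negOnePow (δ (σ p.1) * δ (σ p.2)) : ℤˣ) : ℤ)

/-- The transferred `L_∞` brackets on the cone `C_{(h,g)}`, given by the explicit
rooted-tree formula
`⟨γ₁⊙⋯⊙γ_n⟩_n = ((−1)^{n−2}/2)·Σ_{σ∈Σ_n} ε(σ)·π q₂(ι γ_{σ(1)} ⊙ K q₂(ι γ_{σ(2)} ⊙ ⋯ ⊙
K q₂(ι γ_{σ(n−1)} ⊙ ι γ_{σ(n)})⋯))` (for `n ≥ 2`). -/
def transferBr {n : ℕ} (γ : Fin (n + 2) → Σ δ : ℤ, ConeSh X Y Z δ) :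
    ConeSh X Y Z ((∑ i, (γ i).1) + 1) :=
  ((-1 : ℂ) ^ n * (2 : ℂ)⁻¹) •
    ∑ σ : Equiv.Perm (Fin (n + 2)),
      (koszulSign (fun i => (γ i).1) σ) •
        coneTr X Y Z
          (by
            have h1 : ((List.ofFn fun i : Fin (n+1) => γ (σ i.succ)).map Sigma.fst).sum
                = ∑ i : Fin (n+1), (γ (σ i.succ)).1 := by
              rw [List.map_ofFn, List.sum_ofFn]; rfl
            have h2 : ∑ i : Fin (n+2), (γ (σ i)).1 = ∑ i : Fin (n+2), (γ i).1 :=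
              Equiv.sum_comp σ (fun i => (γ i).1)
            have h3 : ∑ i : Fin (n+2), (γ (σ i)).1
                = (γ (σ 0)).1 + ∑ i : Fin (n+1), (γ (σ i.succ)).1 :=
              Fin.sum_univ_succ _
            rw [innerNest_deg, h1]
            omega)
          (piC X Y Z _
            (hshQ2 X Y Z (γ (σ 0)).1
              (innerNest X Y Z hf gf (List.ofFn fun i : Fin (n+1) => γ (σ i.succ))).1
              (iotaC X Y Z hf gf (γ (σ 0)).1 (γ (σ 0)).2)
              (innerNest X Y Z hf gf (List.ofFn fun i : Fin (n+1) => γ (σ i.succ))).2))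

end Cone

section S13

variable (L M N : DGLA)

/-- An element of the cone concentrated in the `M`-component, i.e. of the form `(0,0,m)`. -/
def pureM {δ : ℤ} (w : ConeSh L.toGLD N.toGLD M.toGLD δ) : Prop :=
  w.1 = 0 ∧ w.2.1 = 0

/-- An element of the cone concentrated in the `L`-component, i.e. of the form `(l,0,0)`. -/
def pureL {δ : ℤ} (w : ConeSh L.toGLD N.toGLD M.toGLD δ) : Prop :=
  w.2.1 = 0 ∧ w.2.2 = 0

/-- An element of the cone concentrated in the `N`-component, i.e. of the form `(0,n,0)`. -/
def pureN {δ : ℤ} (w : ConeSh L.toGLD N.toGLD M.toGLD δ) : Prop :=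
  w.1 = 0 ∧ w.2.2 = 0

namespace Aux13

lemma tr_zero (W : GLD) {i j : ℤ} (e : i = j) : W.tr e 0 = 0 := by subst e; rfl

lemma tr_snd_zero (W : GLD) {i j : ℤ} (e : i = j) (x : (W.tdt).V i) (hx : x.2 = 0) :
    ((W.tdt).tr e x).2 = 0 := by subst e; exact hx

lemma tr_fst_zero (W : GLD) {i j : ℤ} (e : i = j) (x : (W.tdt).V i) (hx : x.1 = 0) :
    ((W.tdt).tr e x).1 = 0 := by subst e; exact hx

variable (X Y Z : GLD)

lemma Ktdt_zero (W : GLD) (n : ℤ) (x : (W.tdt).V n) (hx : x.2 = 0) : W.Ktdt n x = 0 := by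
  unfold GLD.Ktdt GLD.int01 GLD.int0t
  rw [hx]
  simp
  rfl

lemma KC_zero (δ : ℤ) (w : HSh X Y Z δ) (hw : w.2.2.2 = 0) : KC X Y Z δ w = 0 := by
  unfold KC
  rw [Ktdt_zero _ _ _ hw, tr_zero]
  rfl

lemma hshTr_zero {δ δ' : ℤ} (e : δ = δ') : hshTr X Y Z e (0 : HSh X Y Z δ) = 0 := by
  subst e; rfl

lemma coneTr_zero {δ δ' : ℤ} (e : δ = δ') : coneTr X Y Z e (0 : ConeSh X Y Z δ) = 0 := by
  subst e; rfl

end Aux13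
namespace Aux13
variable (X Y Z : GLD)

lemma tdt_br_snd (W : GLD) (n m : ℤ) (x : (W.tdt).V n) (y : (W.tdt).V m)
    (hx : x.2 = 0) (hy : y.2 = 0) : ((W.tdt).br n m x y).2 = 0 := by
  show ((x.1.sum fun i v => y.2.sum fun j w => _) + _ • x.2.sum fun i v => _) = 0
  rw [hx, hy]
  simp

lemma tdt_br_poly (W : GLD) (n m : ℤ) (x : (W.tdt).V n) (y : (W.tdt).V m)
    (hx : x.1 = 0) (hy : y.1 = 0) : (W.tdt).br n m x y = 0 := by
  show (_, _) = 0
  rw [hx, hy]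
  simp [Prod.ext_iff]
  exact ⟨rfl, rfl⟩

lemma hshQ2_snd_snd (p q : ℤ) (v : HSh X Y Z p) (w : HSh X Y Z q)
    (hv : v.2.2.2 = 0) (hw : w.2.2.2 = 0) : (hshQ2 X Y Z p q v w).2.2.2 = 0 := by
  unfold hshQ2
  have h1 : ((Z.tdt).tr (show (p+1) + (q+1) = (p+q+1) + 1 by omega)
      ((Z.tdt).br (p + 1) (q + 1) v.2.2 w.2.2)).2 = 0 :=
    tr_snd_zero _ _ _ (tdt_br_snd _ _ _ _ _ hv hw)
  show ((Int.negOnePow (p + 1) : ℤˣ) : ℤ) • ((Z.tdt).tr (j := p + q + 1 + 1) _ ((Z.tdt).br (p + 1) (q + 1) v.2.2 w.2.2)).2 = 0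
  rw [h1, smul_zero]

lemma hshQ2_poly (p q : ℤ) (v : HSh X Y Z p) (w : HSh X Y Z q)
    (hv : v.2.2.1 = 0) (hw : w.2.2.1 = 0) : (hshQ2 X Y Z p q v w).2.2.2 = 0 := by
  have h0 : (Z.tdt).br (p + 1) (q + 1) v.2.2 w.2.2 = 0 := tdt_br_poly _ _ _ _ _ hv hw
  show ((Int.negOnePow (p + 1) : ℤˣ) : ℤ) • ((Z.tdt).tr (j := p + q + 1 + 1) _ ((Z.tdt).br (p + 1) (q + 1) v.2.2 w.2.2)).2 = 0
  rw [h0, tr_zero]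
  simp
  rfl

end Aux13
namespace Aux13

lemma br_zero_right (A : DGLA) (i j : ℤ) (x : A.V i) : A.br i j x 0 = 0 :=
  map_zero ((A.brLin i j) x)

lemma tdt_br_zero_right (W : GLD) (n m : ℤ) (x : (W.tdt).V n) :
    (W.tdt).br n m x (0 : (W.tdt).V m) = 0 := by
  show (_, _) = 0
  rw [show (0 : (W.tdt).V m) = ((0 : ℕ →₀ W.V m), (0 : ℕ →₀ W.V (m-1))) from rfl]
  simp [Prod.ext_iff]
  exact ⟨rfl, rfl⟩

variable (L M N : DGLA) (h : GLDHom L.toGLD M.toGLD) (g : GLDHom N.toGLD M.toGLD)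

lemma hshQ2_right_zero (p q : ℤ) (v : HSh L.toGLD N.toGLD M.toGLD p) :
    hshQ2 L.toGLD N.toGLD M.toGLD p q v 0 = 0 := by
  unfold hshQ2
  rw [show (0 : HSh L.toGLD N.toGLD M.toGLD q).1 = 0 from rfl,
    show (0 : HSh L.toGLD N.toGLD M.toGLD q).2.1 = 0 from rfl,
    show (0 : HSh L.toGLD N.toGLD M.toGLD q).2.2 = 0 from rfl,
    br_zero_right, br_zero_right, tdt_br_zero_right, tr_zero, tr_zero, tr_zero]
  exact smul_zero _

lemma hshQ2_fst (p q : ℤ) (v : HSh L.toGLD N.toGLD M.toGLD p) (w' : HSh L.toGLD N.toGLD M.toGLD q)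
    (hw : w'.1 = 0) : (hshQ2 L.toGLD N.toGLD M.toGLD p q v w').1 = 0 := by
  unfold hshQ2
  rw [hw, br_zero_right, tr_zero]
  simp only [Prod.smul_fst, Prod.smul_snd, smul_zero]

lemma hshQ2_snd_fst (p q : ℤ) (v : HSh L.toGLD N.toGLD M.toGLD p) (w' : HSh L.toGLD N.toGLD M.toGLD q)
    (hw : w'.2.1 = 0) : (hshQ2 L.toGLD N.toGLD M.toGLD p q v w').2.1 = 0 := by
  unfold hshQ2
  rw [hw, br_zero_right, tr_zero]
  simp only [Prod.smul_fst, Prod.smul_snd, smul_zero]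

end Aux13
namespace Aux13

variable (X Y Z : GLD) (hf : ∀ i, X.V i → Z.V i) (gf : ∀ i, Y.V i → Z.V i)

lemma iota_fst (δ : ℤ) (w : ConeSh X Y Z δ) : (iotaC X Y Z hf gf δ w).1 = w.1 := rfl

lemma iota_snd_fst (δ : ℤ) (w : ConeSh X Y Z δ) : (iotaC X Y Z hf gf δ w).2.1 = w.2.1 := rfl

lemma iota_dt (δ : ℤ) (w : ConeSh X Y Z δ) (hw : w.2.2 = 0) :
    (iotaC X Y Z hf gf δ w).2.2.2 = 0 := by
  show Finsupp.single 0 (Z.tr _ w.2.2) = 0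
  rw [hw, tr_zero, Finsupp.single_zero]

lemma piC_eq_zero (δ : ℤ) (w : HSh X Y Z δ) (h1 : w.1 = 0) (h2 : w.2.1 = 0)
    (h3 : w.2.2.2 = 0) : piC X Y Z δ w = 0 := by
  unfold piC GLD.int01
  rw [h1, h2, h3, Finsupp.sum_zero_index, tr_zero]
  rfl

end Aux13

namespace Aux13

variable (L M N : DGLA) (h : GLDHom L.toGLD M.toGLD) (g : GLDHom N.toGLD M.toGLD)

lemma iota_poly (δ : ℤ) (w : ConeSh L.toGLD N.toGLD M.toGLD δ)
    (h1 : w.1 = 0) (h2 : w.2.1 = 0) :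
    (iotaC L.toGLD N.toGLD M.toGLD h.f g.f δ w).2.2.1 = 0 := by
  show Finsupp.single 0 (g.f _ w.2.1) + Finsupp.single 1 (h.f _ w.1 - g.f _ w.2.1) = 0
  rw [h1, h2, show h.f (δ+1) 0 = 0 from map_zero (h.lin _),
    show g.f (δ+1) 0 = 0 from map_zero (g.lin _)]
  simp

end Aux13
namespace Aux13

variable (X Y Z : GLD)

lemma hshTr_fst_zero {δ δ' : ℤ} (e : δ = δ') (w : HSh X Y Z δ) (hw : w.1 = 0) :
    (hshTr X Y Z e w).1 = 0 := by subst e; rw [show hshTr X Y Z rfl w = w from rfl]; exact hw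

lemma hshTr_snd_fst_zero {δ δ' : ℤ} (e : δ = δ') (w : HSh X Y Z δ) (hw : w.2.1 = 0) :
    (hshTr X Y Z e w).2.1 = 0 := by subst e; rw [show hshTr X Y Z rfl w = w from rfl]; exact hw

lemma hshTr_dt_zero {δ δ' : ℤ} (e : δ = δ') (w : HSh X Y Z δ) (hw : w.2.2.2 = 0) :
    (hshTr X Y Z e w).2.2.2 = 0 := by subst e; rw [show hshTr X Y Z rfl w = w from rfl]; exact hw

variable (hf : ∀ i, X.V i → Z.V i) (gf : ∀ i, Y.V i → Z.V i)

/-- `innerNest` of a list of length ≥ 2 has zero `L`, `N` components and zero `dt`-part. -/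
lemma nest_shape (a b : Σ δ : ℤ, ConeSh X Y Z δ) (rest : List (Σ δ : ℤ, ConeSh X Y Z δ)) :
    (innerNest X Y Z hf gf (a :: b :: rest)).2.1 = 0 ∧
    (innerNest X Y Z hf gf (a :: b :: rest)).2.2.1 = 0 ∧
    (innerNest X Y Z hf gf (a :: b :: rest)).2.2.2.2 = 0 := by
  simp only [innerNest]
  refine ⟨hshTr_fst_zero _ _ _ _ _ rfl, hshTr_snd_fst_zero _ _ _ _ _ rfl,
    hshTr_dt_zero _ _ _ _ _ ?_⟩
  exact tr_snd_zero _ _ _ rfl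

end Aux13
namespace Aux13

variable (L M N : DGLA) (h : GLDHom L.toGLD M.toGLD) (g : GLDHom N.toGLD M.toGLD)

/-- If the nest of the tail vanishes, so does the whole nest. -/
lemma nest_cons_zero (a b : Σ δ : ℤ, ConeSh L.toGLD N.toGLD M.toGLD δ)
    (rest : List (Σ δ : ℤ, ConeSh L.toGLD N.toGLD M.toGLD δ))
    (hr : (innerNest L.toGLD N.toGLD M.toGLD h.f g.f (b :: rest)).2 = 0) :
    (innerNest L.toGLD N.toGLD M.toGLD h.f g.f (a :: b :: rest)).2 = 0 := by
  rw [innerNest.eq_3]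
  rw [hr, hshQ2_right_zero, KC_zero _ _ _ _ _ rfl, hshTr_zero]

/-- Two elements with vanishing `M`-component inside the list kill the nest. -/
lemma nest_two (l : List (Σ δ : ℤ, ConeSh L.toGLD N.toGLD M.toGLD δ)) (j k : ℕ)
    (hjk : j < k) (hk : k < l.length)
    (hj0 : (l[j]'(hjk.trans hk)).2.2.2 = 0) (hk0 : (l[k]'hk).2.2.2 = 0) :
    (innerNest L.toGLD N.toGLD M.toGLD h.f g.f l).2 = 0 := by
  induction l generalizing j k with
  | nil => simp at hk
  | cons a rest ih =>
    obtain ⟨k', rfl⟩ : ∃ k', k = k' + 1 := ⟨k - 1, by omega⟩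
    rw [List.getElem_cons_succ] at hk0
    have hk' : k' < rest.length := by simpa using hk
    cases j with
    | zero =>
      rw [List.getElem_cons_zero] at hj0
      cases rest with
      | nil => simp at hk'
      | cons b rest' =>
        cases rest' with
        | nil =>
          simp only [List.length_singleton] at hk'
          obtain rfl : k' = 0 := by omega
          rw [List.getElem_cons_zero] at hk0
          simp only [innerNest]
          rw [KC_zero _ _ _ _ _ (hshQ2_snd_snd _ _ _ _ _ _ _
            (iota_dt _ _ _ _ _ _ _ hj0) (iota_dt _ _ _ _ _ _ _ hk0))]
          exact hshTr_zero _ _ _ _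
        | cons c rest'' =>
          rw [innerNest.eq_3]
          rw [KC_zero _ _ _ _ _ (hshQ2_snd_snd _ _ _ _ _ _ _
            (iota_dt _ _ _ _ _ _ _ hj0) (nest_shape _ _ _ _ _ _ _ _).2.2), hshTr_zero]
    | succ j' =>
      rw [List.getElem_cons_succ] at hj0
      cases rest with
      | nil => simp at hk'
      | cons b rest' =>
        exact nest_cons_zero L M N h g _ _ _ (ih j' k' (by omega) hk' hj0 hk0)

/-- The nest of a list of length at least two of elements concentrated in `M` vanishes. -/
lemma nest_allM (l : List (Σ δ : ℤ, ConeSh L.toGLD N.toGLD M.toGLD δ)) (hl : 2 ≤ l.length)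
    (hM : ∀ a ∈ l, a.2.1 = 0 ∧ a.2.2.1 = 0) :
    (innerNest L.toGLD N.toGLD M.toGLD h.f g.f l).2 = 0 := by
  induction l with
  | nil => simp at hl
  | cons a rest ih =>
    cases rest with
    | nil => simp at hl
    | cons b rest' =>
      cases rest' with
      | nil =>
        have ha := hM a (by simp)
        have hb := hM b (by simp)
        simp only [innerNest]
        rw [KC_zero _ _ _ _ _ (hshQ2_poly _ _ _ _ _ _ _
          (iota_poly _ _ _ _ _ _ _ ha.1 ha.2) (iota_poly _ _ _ _ _ _ _ hb.1 hb.2))]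
        exact hshTr_zero _ _ _ _
      | cons c rest'' =>
        refine nest_cons_zero L M N h g _ _ _ (ih ?_ ?_)
        · simp
        · intro x hx; exact hM x (by simp [hx])

end Aux13
namespace Aux13

variable (L M N : DGLA) (h : GLDHom L.toGLD M.toGLD) (g : GLDHom N.toGLD M.toGLD)

lemma term_zero (p : ℤ) (v : ConeSh L.toGLD N.toGLD M.toGLD p) (q : ℤ)
    (w : HSh L.toGLD N.toGLD M.toGLD q)
    (H : (v.2.2 = 0 ∧ w.1 = 0 ∧ w.2.1 = 0 ∧ w.2.2.2 = 0) ∨ w = 0) :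
    piC L.toGLD N.toGLD M.toGLD (p + q + 1) (hshQ2 L.toGLD N.toGLD M.toGLD p q
      (iotaC L.toGLD N.toGLD M.toGLD h.f g.f p v) w) = 0 := by
  rcases H with ⟨hv, h1, h2, h3⟩ | rfl
  · exact piC_eq_zero _ _ _ _ _ (hshQ2_fst _ _ _ _ _ _ _ h1)
      (hshQ2_snd_fst _ _ _ _ _ _ _ h2)
      (hshQ2_snd_snd _ _ _ _ _ _ _ (iota_dt _ _ _ _ _ _ _ hv) h3)
  · rw [hshQ2_right_zero]
    exact piC_eq_zero _ _ _ _ _ rfl rfl rfl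

end Aux13

namespace Aux13
variable (X Y Z : GLD) (hf : ∀ i, X.V i → Z.V i) (gf : ∀ i, Y.V i → Z.V i)

lemma nest_shape' (l : List (Σ δ : ℤ, ConeSh X Y Z δ)) (hl : 2 ≤ l.length) :
    (innerNest X Y Z hf gf l).2.1 = 0 ∧
    (innerNest X Y Z hf gf l).2.2.1 = 0 ∧
    (innerNest X Y Z hf gf l).2.2.2.2 = 0 := by
  match l, hl with
  | a :: b :: rest, _ => exact nest_shape X Y Z hf gf a b rest

end Aux13

/-- For the transferred `L_∞` structure on the cone `C_{(h,g)} = L ⊕ N ⊕ M[−1]`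
(defined by the explicit rooted-tree formula via `ι`, `π`, `K`), all higher brackets
`⟨γ₁ ⊙ ⋯ ⊙ γ_k⟩_k` with `k ≥ 3` vanish on tuples of elements each lying in `L`, `N` or
`M`, except possibly on tuples consisting of `k−1` elements of `M` together with a single
element of `L` or of `N`. -/
theorem statement13 (h : GLDHom L.toGLD M.toGLD) (g : GLDHom N.toGLD M.toGLD)
    (n : ℕ) (γ : Fin (n + 3) → Σ δ : ℤ, ConeSh L.toGLD N.toGLD M.toGLD δ)
    (hpure : ∀ i, pureL L M N (γ i).2 ∨ pureN L M N (γ i).2 ∨ pureM L M N (γ i).2)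
    (hnot : ¬ ∃ i₀, (pureL L M N (γ i₀).2 ∨ pureN L M N (γ i₀).2) ∧
      ∀ i, i ≠ i₀ → pureM L M N (γ i).2) :
    transferBr L.toGLD N.toGLD M.toGLD h.f g.f γ = 0 := by
  by_cases hall : ∀ i, pureM L M N (γ i).2
  · unfold transferBr
    refine smul_eq_zero_of_right _ (Finset.sum_eq_zero fun σ _ => ?_)
    refine smul_eq_zero_of_right _ ?_
    have hM : ∀ a ∈ (List.ofFn fun i : Fin (n + 1 + 1) => γ (σ i.succ)),
        a.2.1 = 0 ∧ a.2.2.1 = 0 := by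
      intro a ha
      obtain ⟨i, rfl⟩ := List.mem_ofFn.mp ha
      exact hall _
    rw [Aux13.term_zero L M N h g _ _ _ _
      (Or.inr (Aux13.nest_allM L M N h g _ (by simp) hM)), Aux13.coneTr_zero]
  · push_neg at hall
    obtain ⟨i₁, hi₁⟩ := hall
    have hLN : ∀ i, ¬ pureM L M N (γ i).2 → ((γ i).2).2.2 = 0 := by
      intro i hi
      rcases hpure i with hL | hN | hM
      · exact hL.2
      · exact hN.2
      · exact absurd hM hi
    obtain ⟨i₂, hne, hi₂⟩ : ∃ i₂, i₂ ≠ i₁ ∧ ¬ pureM L M N (γ i₂).2 := by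
      by_contra hc
      push_neg at hc
      rcases hpure i₁ with hL | hN | hM
      · exact hnot ⟨i₁, Or.inl hL, hc⟩
      · exact hnot ⟨i₁, Or.inr hN, hc⟩
      · exact hi₁ hM
    unfold transferBr
    refine smul_eq_zero_of_right _ (Finset.sum_eq_zero fun σ _ => ?_)
    refine smul_eq_zero_of_right _ ?_
    by_cases h0 : ((γ (σ 0)).2).2.2 = 0
    · have hsh := Aux13.nest_shape' L.toGLD N.toGLD M.toGLD h.f g.f
        (List.ofFn fun i : Fin (n + 1 + 1) => γ (σ i.succ)) (by simp)
      rw [Aux13.term_zero L M N h g _ _ _ _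
        (Or.inl ⟨h0, hsh.1, hsh.2.1, hsh.2.2⟩), Aux13.coneTr_zero]
    · have hs1 : σ.symm i₁ ≠ 0 := by
        intro he
        refine h0 ?_
        have : σ 0 = i₁ := by rw [← he, Equiv.apply_symm_apply]
        rw [this]
        exact hLN i₁ hi₁
      have hs2 : σ.symm i₂ ≠ 0 := by
        intro he
        refine h0 ?_
        have : σ 0 = i₂ := by rw [← he, Equiv.apply_symm_apply]
        rw [this]
        exact hLN i₂ hi₂
      obtain ⟨p₁, hp₁⟩ := Fin.eq_succ_of_ne_zero hs1
      obtain ⟨p₂, hp₂⟩ := Fin.eq_succ_of_ne_zero hs2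
      have hget : ∀ (p : Fin (n + 1 + 1)) (i : Fin (n + 3)), σ.symm i = p.succ →
          ¬ pureM L M N (γ i).2 →
          ((List.ofFn fun j : Fin (n + 1 + 1) => γ (σ j.succ))[p.val]'(by
            simp; omega)).2.2.2 = 0 := by
        intro p i hp hi
        have : (List.ofFn fun j : Fin (n + 1 + 1) => γ (σ j.succ))[p.val]'(by
            simp; omega) = γ (σ p.succ) := by
          rw [List.getElem_ofFn]
        rw [this, ← hp, Equiv.apply_symm_apply]
        exact hLN i hi
      have hd1 := hget p₁ i₁ hp₁ hi₁
      have hd2 := hget p₂ i₂ hp₂ hi₂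
      have hpp : p₁.val ≠ p₂.val := by
        intro hv
        apply hne
        have : p₁ = p₂ := Fin.ext hv
        rw [← Equiv.apply_symm_apply σ i₂, ← Equiv.apply_symm_apply σ i₁, hp₁, hp₂, this]
      have hnest : (innerNest L.toGLD N.toGLD M.toGLD h.f g.f
          (List.ofFn fun j : Fin (n + 1 + 1) => γ (σ j.succ))).2 = 0 := by
        rcases Nat.lt_or_ge p₁.val p₂.val with hlt | hge
        · exact Aux13.nest_two L M N h g _ p₁.val p₂.val hlt (by simp; omega) hd1 hd2
        · have hlt : p₂.val < p₁.val := by omega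
          exact Aux13.nest_two L M N h g _ p₂.val p₁.val hlt (by simp; omega) hd2 hd1
      rw [Aux13.term_zero L M N h g _ _ _ _ (Or.inr hnest), Aux13.coneTr_zero]
end S13
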